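/- Let k be a field, q ∈ k, and A = k⟨x,y⟩/(x², xy + q·yx, y²). Then A is a 4-dimensional k-vector space with basis {1, y, x, yx}. -/

import Mathlib

open scoped TensorProduct

/-- The relations `x² = 0`, `xy + q·yx = 0`, `y² = 0` on the free algebra `k⟨x,y⟩`. -/
inductive PathologicalRel (k : Type) [Field k] (q : k) :
    FreeAlgebra k (Fin 2) → FreeAlgebra k (Fin 2) → Prop
  | xx : PathologicalRel k q (FreeAlgebra.ι k 0 * FreeAlgebra.ι k 0) 0
  | xyqyx : PathologicalRel k q
      (FreeAlgebra.ι k 0 * FreeAlgebra.ι k 1 + q • (FreeAlgebra.ι k 1 * FreeAlgebra.ι k 0)) 0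
  | yy : PathologicalRel k q (FreeAlgebra.ι k 1 * FreeAlgebra.ι k 1) 0

/-- The algebra `A_q = k⟨x,y⟩/(x², xy + q·yx, y²)`. -/
abbrev PathologicalAlgebra (k : Type) [Field k] (q : k) := RingQuot (PathologicalRel k q)

section Aux

variable (k : Type) [Field k] (q : k)

noncomputable def PX : PathologicalAlgebra k q :=
  RingQuot.mkAlgHom k (PathologicalRel k q) (FreeAlgebra.ι k 0)

noncomputable def PY : PathologicalAlgebra k q :=
  RingQuot.mkAlgHom k (PathologicalRel k q) (FreeAlgebra.ι k 1)

lemma hxx : PX k q * PX k q = 0 := by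
  have := RingQuot.mkAlgHom_rel k (PathologicalRel.xx (k := k) (q := q))
  simpa [PX, map_mul] using this

lemma hyy : PY k q * PY k q = 0 := by
  have := RingQuot.mkAlgHom_rel k (PathologicalRel.yy (k := k) (q := q))
  simpa [PY, map_mul] using this

lemma hxy : PX k q * PY k q = (-q) • (PY k q * PX k q) := by
  have := RingQuot.mkAlgHom_rel k (PathologicalRel.xyqyx (k := k) (q := q))
  simp only [map_add, map_mul, map_smul, map_zero] at this
  rw [PX, PY]
  linear_combination (norm := module) this

/-- matrix model: left regular representation on basis 1, y, x, yx -/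
def MX : Matrix (Fin 4) (Fin 4) k := !![0,0,0,0; 0,0,0,0; 1,0,0,0; 0,-q,0,0]
def MY : Matrix (Fin 4) (Fin 4) k := !![0,0,0,0; 1,0,0,0; 0,0,0,0; 0,0,1,0]

lemma mxx : MX k q * MX k q = 0 := by
  ext i j
  fin_cases i <;> fin_cases j <;>
    simp [MX, Matrix.mul_apply, Fin.sum_univ_four]

lemma myy : MY k * MY k = 0 := by
  ext i j
  fin_cases i <;> fin_cases j <;>
    simp [MY, Matrix.mul_apply, Fin.sum_univ_four]

lemma mxyq : MX k q * MY k + q • (MY k * MX k q) = 0 := by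
  ext i j
  fin_cases i <;> fin_cases j <;>
    simp [MX, MY, Matrix.mul_apply, Fin.sum_univ_four, Matrix.vecHead, Matrix.vecTail,
      Function.comp]

noncomputable def phi : PathologicalAlgebra k q →ₐ[k] Matrix (Fin 4) (Fin 4) k :=
  RingQuot.liftAlgHom k ⟨FreeAlgebra.lift k ![MX k q, MY k], by
    intro a b h
    induction h with
    | xx =>
        simp only [map_mul, map_zero, FreeAlgebra.lift_ι_apply, Matrix.cons_val_zero]
        exact mxx k q
    | yy =>
        simp only [map_mul, map_zero, FreeAlgebra.lift_ι_apply, Matrix.cons_val_one,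
          Matrix.head_cons]
        exact myy k
    | xyqyx =>
        simp only [map_add, map_smul, map_mul, map_zero, FreeAlgebra.lift_ι_apply,
          Matrix.cons_val_zero, Matrix.cons_val_one, Matrix.head_cons]
        exact mxyq k q⟩

lemma phiX : phi k q (PX k q) = MX k q := by
  rw [PX, phi]
  rw [RingQuot.liftAlgHom_mkAlgHom_apply]
  simp [FreeAlgebra.lift_ι_apply]

lemma phiY : phi k q (PY k q) = MY k := by
  rw [PY, phi]
  rw [RingQuot.liftAlgHom_mkAlgHom_apply]
  simp [FreeAlgebra.lift_ι_apply]

noncomputable def col0 : Matrix (Fin 4) (Fin 4) k →ₗ[k] (Fin 4 → k) where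
  toFun M := fun i => M i 0
  map_add' _ _ := rfl
  map_smul' _ _ := rfl

noncomputable def psi : PathologicalAlgebra k q →ₗ[k] (Fin 4 → k) :=
  (col0 k).comp (phi k q).toLinearMap

noncomputable def fam : Fin 4 → PathologicalAlgebra k q :=
  ![1, PY k q, PX k q, PY k q * PX k q]

lemma psi_fam : ⇑(psi k q) ∘ fam k q = fun j => Pi.single j (1 : k) := by
  funext j i
  fin_cases j <;> fin_cases i <;>
    simp [psi, col0, fam, phiX, phiY, MX, MY, map_mul, map_one,
      Matrix.mul_apply, Fin.sum_univ_four, Matrix.vecHead, Matrix.vecTail, Matrix.one_apply, Pi.single_apply,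
        LinearMap.coe_mk, AddHom.coe_mk]
  all_goals rfl

lemma fam_li : LinearIndependent k (fam k q) := by
  apply LinearIndependent.of_comp (psi k q)
  rw [psi_fam]
  convert (Pi.basisFun k (Fin 4)).linearIndependent using 1
  funext j
  simp [Pi.basisFun_apply]

lemma fam_span : ⊤ ≤ Submodule.span k (Set.range (fam k q)) := by
  set S := Submodule.span k (Set.range (fam k q)) with hS
  have hmem : ∀ j, fam k q j ∈ S := fun j => Submodule.subset_span ⟨j, rfl⟩
  have hprod : ∀ i j, fam k q i * fam k q j ∈ S := by
    intro i j
    have h1 := hmem 0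
    have hy := hmem 1
    have hx := hmem 2
    have hyx := hmem 3
    fin_cases i <;> fin_cases j
    · show (1 : PathologicalAlgebra k q) * 1 ∈ S
      rw [one_mul]; exact h1
    · show (1 : PathologicalAlgebra k q) * PY k q ∈ S
      rw [one_mul]; exact hy
    · show (1 : PathologicalAlgebra k q) * PX k q ∈ S
      rw [one_mul]; exact hx
    · show (1 : PathologicalAlgebra k q) * (PY k q * PX k q) ∈ S
      rw [one_mul]; exact hyx
    · show PY k q * 1 ∈ S
      rw [mul_one]; exact hy
    · show PY k q * PY k q ∈ S
      rw [hyy]; exact S.zero_mem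
    · show PY k q * PX k q ∈ S
      exact hyx
    · show PY k q * (PY k q * PX k q) ∈ S
      rw [← mul_assoc, hyy, zero_mul]; exact S.zero_mem
    · show PX k q * 1 ∈ S
      rw [mul_one]; exact hx
    · show PX k q * PY k q ∈ S
      rw [hxy]; exact S.smul_mem _ hyx
    · show PX k q * PX k q ∈ S
      rw [hxx]; exact S.zero_mem
    · show PX k q * (PY k q * PX k q) ∈ S
      have h0 : PX k q * (PY k q * PX k q) = 0 := by
        rw [← mul_assoc, hxy, smul_mul_assoc, mul_assoc, hxx, mul_zero, smul_zero]
      rw [h0]; exact S.zero_mem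
    · show PY k q * PX k q * 1 ∈ S
      rw [mul_one]; exact hyx
    · show PY k q * PX k q * PY k q ∈ S
      have h0 : PY k q * PX k q * PY k q = 0 := by
        rw [mul_assoc, hxy, mul_smul_comm, ← mul_assoc, hyy, zero_mul, smul_zero]
      rw [h0]; exact S.zero_mem
    · show PY k q * PX k q * PX k q ∈ S
      rw [mul_assoc, hxx, mul_zero]; exact S.zero_mem
    · show PY k q * PX k q * (PY k q * PX k q) ∈ S
      have h0 : PY k q * PX k q * (PY k q * PX k q) = 0 := by
        rw [mul_assoc, ← mul_assoc (PX k q), hxy, smul_mul_assoc,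
          mul_assoc (PY k q), hxx, mul_zero, smul_zero, mul_zero]
      rw [h0]; exact S.zero_mem
  have hmul : ∀ a ∈ S, ∀ b ∈ S, a * b ∈ S := by
    intro a ha b hb
    have hle : S * S ≤ S := by
      rw [hS, Submodule.span_mul_span]
      rw [Submodule.span_le]
      rintro _ ⟨u, ⟨i, rfl⟩, v, ⟨j, rfl⟩, rfl⟩
      exact hprod i j
    exact hle (Submodule.mul_mem_mul ha hb)
  intro a _
  obtain ⟨z, rfl⟩ := RingQuot.mkAlgHom_surjective k (PathologicalRel k q) a
  induction z using FreeAlgebra.induction with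
  | grade0 r =>
      rw [AlgHom.commutes]
      have : (algebraMap k (PathologicalAlgebra k q)) r = r • (1 : _) := by
        rw [Algebra.smul_def, mul_one]
      rw [this]
      exact S.smul_mem r (hmem 0)
  | grade1 i =>
      fin_cases i
      · exact hmem 2
      · exact hmem 1
  | mul a b ha hb =>
      rw [map_mul]; exact hmul _ (ha Submodule.mem_top) _ (hb Submodule.mem_top)
  | add a b ha hb =>
      rw [map_add]; exact S.add_mem (ha Submodule.mem_top) (hb Submodule.mem_top)

end Aux

/-- `A_q` is a 4-dimensional `k`-vector space with basis `{1, y, x, yx}`. -/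
theorem pathological_algebra_basis (k : Type) [Field k] (q : k) :
    Module.finrank k (PathologicalAlgebra k q) = 4 ∧
    ∃ b : Module.Basis (Fin 4) k (PathologicalAlgebra k q),
      b 0 = 1 ∧
      b 1 = RingQuot.mkAlgHom k (PathologicalRel k q) (FreeAlgebra.ι k 1) ∧
      b 2 = RingQuot.mkAlgHom k (PathologicalRel k q) (FreeAlgebra.ι k 0) ∧
      b 3 = RingQuot.mkAlgHom k (PathologicalRel k q) (FreeAlgebra.ι k 1) *
            RingQuot.mkAlgHom k (PathologicalRel k q) (FreeAlgebra.ι k 0) := by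
  let b : Module.Basis (Fin 4) k (PathologicalAlgebra k q) :=
    Module.Basis.mk (fam_li k q) (fam_span k q)
  have hb : ∀ j, b j = fam k q j := fun j => Module.Basis.mk_apply _ _ j
  refine ⟨?_, b, hb 0, hb 1, hb 2, hb 3⟩
  rw [Module.finrank_eq_card_basis b, Fintype.card_fin]
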